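/- arXiv:1106.5246 — 6 statements merged into one kernel-verified Lean document; each statement's English description precedes it below -/
import Mathlib

section
/- The map f ↦ L^λ_{X_f} := X_f + λf′ is a representation of the contact Lie superalgebra: for homogeneous Hamiltonians f, g one has [L^λ_{X_f}, L^λ_{X_g}] = L^λ_{X_{{f,g}}}, where {f,g} = fg' - f'g - (-1)^{p(f)}½(D̄₁(f)D̄₁(g) + D̄₂(f)D̄₂(g)). -/
noncomputable section

open Polynomial

/-- The Grassmann algebra `C^∞(S¹)[ξ₁,ξ₂]` (polynomial model in `x`):
an element `f₀ + ξ₁f₁ + ξ₂f₂ + ξ₁ξ₂f₁₂` is encoded by its four components. -/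
abbrev Gr := Polynomial ℂ × Polynomial ℂ × Polynomial ℂ × Polynomial ℂ

namespace Gr

/-- Supercommutative multiplication. -/
def gmul (f g : Gr) : Gr :=
  (f.1 * g.1,
   f.1 * g.2.1 + f.2.1 * g.1,
   f.1 * g.2.2.1 + f.2.2.1 * g.1,
   f.1 * g.2.2.2 + f.2.2.2 * g.1 + f.2.1 * g.2.2.1 - f.2.2.1 * g.2.1)

/-- The even vector field `∂ₓ`. -/
def dX (f : Gr) : Gr :=
  (derivative f.1, derivative f.2.1, derivative f.2.2.1, derivative f.2.2.2)

/-- The left odd derivation `∂_{ξ₁}`. -/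
def dXi1 (f : Gr) : Gr := (f.2.1, 0, f.2.2.2, 0)

/-- The left odd derivation `∂_{ξ₂}`. -/
def dXi2 (f : Gr) : Gr := (f.2.2.1, -f.2.2.2, 0, 0)

def xi1 : Gr := (0, 1, 0, 0)
def xi2 : Gr := (0, 0, 1, 0)
def xi12 : Gr := (0, 0, 0, 1)
def oneG : Gr := (1, 0, 0, 0)
def xG : Gr := (Polynomial.X, 0, 0, 0)

/-- `D̄₁ = ∂_{ξ₁} - ξ₁∂ₓ`. -/
def D1b (f : Gr) : Gr := dXi1 f - gmul xi1 (dX f)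
/-- `D̄₂ = ∂_{ξ₂} - ξ₂∂ₓ`. -/
def D2b (f : Gr) : Gr := dXi2 f - gmul xi2 (dX f)
/-- `D₁ = ∂_{ξ₁} + ξ₁∂ₓ`. -/
def Dp1 (f : Gr) : Gr := dXi1 f + gmul xi1 (dX f)
/-- `D₂ = ∂_{ξ₂} + ξ₂∂ₓ`. -/
def Dp2 (f : Gr) : Gr := dXi2 f + gmul xi2 (dX f)

/-- `f` is homogeneous of parity `p` (`false` = even, `true` = odd). -/
def IsHom (f : Gr) (p : Bool) : Prop :=
  if p then f.1 = 0 ∧ f.2.2.2 = 0 else f.2.1 = 0 ∧ f.2.2.1 = 0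

/-- `(-1)^p`. -/
def sgn (p : Bool) : ℂ := if p then -1 else 1

/-- The contact vector field `X_f = f∂ₓ - (-1)^{p(f)} ½(D̄₁(f)D̄₁ + D̄₂(f)D̄₂)`. -/
def Xv (f : Gr) (p : Bool) (F : Gr) : Gr :=
  gmul f (dX F) - (sgn p * (1/2 : ℂ)) • (gmul (D1b f) (D1b F) + gmul (D2b f) (D2b F))

/-- The Lie derivative `L^λ_{X_f} = X_f + λ f′` on λ-densities. -/
def L (lam : ℂ) (f : Gr) (p : Bool) (F : Gr) : Gr :=
  Xv f p F + lam • gmul (dX f) F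

/-- The contact bracket `{f,g} = fg' - f'g - (-1)^{p(f)} ½(D̄₁(f)D̄₁(g) + D̄₂(f)D̄₂(g))`. -/
def cbr (f : Gr) (p : Bool) (g : Gr) : Gr :=
  gmul f (dX g) - gmul (dX f) g
    - (sgn p * (1/2 : ℂ)) • (gmul (D1b f) (D1b g) + gmul (D2b f) (D2b g))

/-- Generalized binomial coefficient `z(z-1)⋯(z-m+1)/m!`. -/
noncomputable def cbinom (z : ℂ) (m : ℕ) : ℂ :=
  (∏ i ∈ Finset.range m, (z - i)) / (Nat.factorial m)


lemma ite_ff : (if (false = true) then (-1:ℂ) else 1) = 1 := rfl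
lemma ite_tt : (if (true = true) then (-1:ℂ) else 1) = -1 := rfl

set_option maxHeartbeats 4000000 in
/-- `f ↦ L^λ_{X_f}` is a representation of the contact Lie superalgebra:
`[L^λ_{X_f}, L^λ_{X_g}] = L^λ_{X_{{f,g}}}`. -/
theorem stmt4 (lam : ℂ) (f g : Gr) (p q : Bool) (hf : IsHom f p) (hg : IsHom g q) :
    ∀ F : Gr,
      L lam f p (L lam g q F) - (if p && q then (-1 : ℂ) else 1) • L lam g q (L lam f p F)
        = L lam (cbr f p g) (xor p q) F := by
  obtain ⟨f0,f1,f2,f3⟩ := f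
  obtain ⟨g0,g1,g2,g3⟩ := g
  intro F
  obtain ⟨F0,F1,F2,F3⟩ := F
  cases p <;> cases q <;>
    simp only [IsHom, if_true, if_false] at hf hg <;>
    obtain ⟨hf1,hf2⟩ := hf <;> obtain ⟨hg1,hg2⟩ := hg <;>
    subst hf1 hf2 hg1 hg2 <;>
    simp only [L, Xv, cbr, D1b, D2b, dXi1, dXi2, dX, gmul, xi1, xi2, sgn,
      Prod.mk_add_mk, Prod.mk_sub_mk, Prod.smul_mk, Prod.mk.injEq,
      Bool.and_self, Bool.and_false, Bool.false_and, Bool.and_true, Bool.true_and,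
      Bool.xor_self, Bool.xor_false, Bool.false_xor, Bool.xor_true, Bool.true_xor,
      Bool.not_true, Bool.not_false, ite_ff, ite_tt, if_true, if_false, ite_true, ite_false,
      derivative_add, derivative_sub, derivative_mul, derivative_neg,
      derivative_zero, derivative_one, derivative_C,
      smul_eq_C_mul, map_add, map_sub, map_mul, map_neg, map_zero, map_one,
      neg_zero, mul_zero, zero_mul, add_zero, zero_add, sub_zero, zero_sub,
      mul_one, one_mul, mul_neg, neg_mul, neg_neg] <;>
    refine ⟨?_,?_,?_,?_⟩ <;>
    · apply Polynomial.funext; intro z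
      simp only [eval_add, eval_sub, eval_mul, eval_neg, eval_C, eval_pow, eval_ofNat,
        eval_zero, eval_one]
      ring

end Gr
end
end

section
/- For contact Hamiltonians f in the affine set {1, ξ₁, ξ₂, x, ξ₁ξ₂}, the term D̄₁D̄₂(f) is constant, and consequently for a half-integer-order symbol pair (F₁,F₂), the action L_{X_f}(F₁,F₂) = (L^δ_{X_f}(F₁) - ½D̄₁D̄₂(f)F₂, L^δ_{X_f}(F₂) + ½D̄₁D̄₂(f)F₁) reduces to the diagonal density action (L^δ_{X_f}F₁, L^δ_{X_f}F₂) precisely when f ∈ {1, ξ₁, ξ₂, x}, while for f = ξ₁ξ₂ it has the extra rotation term with D̄₁D̄₂(ξ₁ξ₂) = -1 (i.e. equal to a nonzero constant). -/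
noncomputable section

open Polynomial

namespace Gr

/-- The affine Hamiltonians `{1, ξ₁, ξ₂, x, ξ₁ξ₂}` with their parities. -/
def aff5 : Fin 5 → Gr × Bool :=
  ![(oneG, false), (xi1, true), (xi2, true), (xG, false), (xi12, false)]

/-- The twisted action on half-integer-order symbol pairs. -/
def Ltw (δ : ℂ) (f : Gr) (p : Bool) (F : Gr × Gr) : Gr × Gr :=
  (L δ f p F.1 - (1/2 : ℂ) • gmul (D1b (D2b f)) F.2,
   L δ f p F.2 + (1/2 : ℂ) • gmul (D1b (D2b f)) F.1)

/-- for affine `f`, `D̄₁D̄₂(f)` is constant; the twisted action reduces to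
the diagonal density action exactly for `f ∈ {1, ξ₁, ξ₂, x}`, while for `f = ξ₁ξ₂`
one has `D̄₁D̄₂(ξ₁ξ₂) = -1 ≠ 0` and the extra rotation term does not vanish. -/
theorem stmt7 :
    (∀ i : Fin 5, ∃ c : ℂ, D1b (D2b (aff5 i).1) = c • oneG) ∧
    (∀ i : Fin 4, ∀ (δ : ℂ) (F1 F2 : Gr),
      Ltw δ (aff5 i.castSucc).1 (aff5 i.castSucc).2 (F1, F2)
        = (L δ (aff5 i.castSucc).1 (aff5 i.castSucc).2 F1,
           L δ (aff5 i.castSucc).1 (aff5 i.castSucc).2 F2)) ∧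
    D1b (D2b xi12) = (-1 : ℂ) • oneG ∧ (-1 : ℂ) ≠ 0 ∧
    (∃ (δ : ℂ) (F1 F2 : Gr),
      Ltw δ xi12 false (F1, F2) ≠ (L δ xi12 false F1, L δ xi12 false F2)) := by

  constructor
  · intro i
    fin_cases i
    · exact ⟨0, by simp [aff5, oneG, D1b, D2b, dXi1, dXi2, dX, gmul, xi1, xi2, Prod.ext_iff]⟩
    · exact ⟨0, by simp [aff5, oneG, D1b, D2b, dXi1, dXi2, dX, gmul, xi1, xi2, Prod.ext_iff]⟩
    · exact ⟨0, by simp [aff5, oneG, D1b, D2b, dXi1, dXi2, dX, gmul, xi1, xi2, Prod.ext_iff]⟩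
    · exact ⟨0, by simp [aff5, oneG, xG, D1b, D2b, dXi1, dXi2, dX, gmul, xi1, xi2, Prod.ext_iff]⟩
    · exact ⟨-1, by simp [aff5, oneG, xi12, D1b, D2b, dXi1, dXi2, dX, gmul, xi1, xi2, Prod.ext_iff]⟩
  refine ⟨?_, ?_, by norm_num, ?_⟩
  · intro i δ F1 F2
    fin_cases i <;>
      simp [Fin.castSucc, Fin.castAdd, Fin.castLE, Ltw, L, Xv, sgn, aff5, oneG, xG,
        D1b, D2b, dXi1, dXi2, dX, gmul, xi1, xi2, Prod.ext_iff]
  · simp [xi12, oneG, D1b, D2b, dXi1, dXi2, dX, gmul, xi1, xi2, Prod.ext_iff]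
  · refine ⟨0, oneG, 0, ?_⟩
    simp only [Ltw, L, Xv, ne_eq, Prod.ext_iff, not_and]
    intro _
    simp [xi12, oneG, D1b, D2b, dXi1, dXi2, dX, gmul, xi1, xi2, sgn, Prod.ext_iff]


end Gr
end
end

section
/- Let k ≥ 1 be an integer, λ, μ ∈ ℂ with 2(μ-λ) ∉ {0,1,2,...,2k}. Then the recurrence system ℓ(ℓ-1+2(μ-λ-k))C_{2ℓ,1} = -(k-ℓ+1)(k-ℓ+2λ)C_{2ℓ-2,1} with initial condition C_{0,1} = 1 has the unique solution C_{2ℓ,1} = (k+2λ-ℓ)(2(μ-λ-k)+ℓ)/(ℓ(k-ℓ)) · C_{2ℓ,3} for 1 ≤ ℓ ≤ k-1, where C_{2ℓ,3} = -binom(k, ℓ+1)·binom(k+2λ-1, ℓ-1)/binom(-2(μ-λ-k), ℓ+1), with generalized binomial coefficients binom(n,m) = n(n-1)⋯(n-m+1)/m!. -/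
noncomputable section

open Polynomial

namespace Gr

/-- The closed-form solution `C_{2ℓ,1}` (with `C_{0,1} = 1`). -/
noncomputable def Cform1 (k : ℕ) (lam mu : ℂ) (ℓ : ℕ) : ℂ :=
  if ℓ = 0 then 1 else
    (((k : ℂ) + 2*lam - ℓ) * (2*(mu - lam - (k : ℂ)) + ℓ) / ((ℓ : ℂ) * ((k : ℂ) - ℓ))) *
      (-(cbinom (k : ℂ) (ℓ+1) * cbinom ((k : ℂ) + 2*lam - 1) (ℓ-1))
        / cbinom (-2*(mu - lam - (k : ℂ))) (ℓ+1))


lemma cbinom_succ' (z : ℂ) (m : ℕ) :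
    cbinom z (m+1) = cbinom z m * (z - m) / (m+1) := by
  have h1 : ((Nat.factorial m : ℂ)) ≠ 0 := Nat.cast_ne_zero.mpr (Nat.factorial_ne_zero m)
  have h2 : ((m:ℂ) + 1) ≠ 0 := by
    have := Nat.cast_ne_zero (R := ℂ).mpr (Nat.succ_ne_zero m)
    push_cast at this; exact this
  simp only [cbinom, Finset.prod_range_succ, Nat.factorial_succ]
  push_cast
  field_simp

lemma cbinom_ne_zero' (z : ℂ) (m : ℕ) (h : ∀ i : ℕ, i < m → z - i ≠ 0) :
    cbinom z m ≠ 0 := by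
  apply div_ne_zero
  · exact Finset.prod_ne_zero_iff.mpr fun i hi => h i (Finset.mem_range.mp hi)
  · exact Nat.cast_ne_zero.mpr (Nat.factorial_ne_zero m)

set_option maxHeartbeats 1000000 in
/-- under the nonresonance condition `2(μ-λ) ∉ {0,1,…,2k}`, the recurrence
`ℓ(ℓ-1+2(μ-λ-k))C_{2ℓ,1} = -(k-ℓ+1)(k-ℓ+2λ)C_{2ℓ-2,1}` with `C_{0,1} = 1` has the
closed form `Cform1` as its unique solution on `1 ≤ ℓ ≤ k-1`. -/
theorem stmt8 (k : ℕ) (hk : 1 ≤ k) (lam mu : ℂ)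
    (hres : ∀ j : ℕ, j ≤ 2*k → 2*(mu - lam) ≠ (j : ℂ)) :
    (Cform1 k lam mu 0 = 1 ∧
      ∀ ℓ : ℕ, 1 ≤ ℓ → ℓ ≤ k - 1 →
        (ℓ : ℂ) * ((ℓ : ℂ) - 1 + 2*(mu - lam - (k : ℂ))) * Cform1 k lam mu ℓ
          = -(((k : ℂ) - ℓ + 1) * ((k : ℂ) - ℓ + 2*lam)) * Cform1 k lam mu (ℓ-1)) ∧
    ∀ C : ℕ → ℂ, C 0 = 1 →
      (∀ ℓ : ℕ, 1 ≤ ℓ → ℓ ≤ k - 1 →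
        (ℓ : ℂ) * ((ℓ : ℂ) - 1 + 2*(mu - lam - (k : ℂ))) * C ℓ
          = -(((k : ℂ) - ℓ + 1) * ((k : ℂ) - ℓ + 2*lam)) * C (ℓ-1)) →
      ∀ ℓ : ℕ, 1 ≤ ℓ → ℓ ≤ k - 1 → C ℓ = Cform1 k lam mu ℓ := by
  have hneg : ∀ i : ℕ, i ≤ 2*k → -2*(mu - lam - (k:ℂ)) - i ≠ 0 := by
    intro i hi h
    apply hres (2*k - i) (Nat.sub_le _ _)
    rw [Nat.cast_sub hi]
    push_cast
    linear_combination -h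
  have hcoef : ∀ ℓ : ℕ, 1 ≤ ℓ → ℓ ≤ 2*k →
      (ℓ : ℂ) - 1 + 2*(mu - lam - (k:ℂ)) ≠ 0 := by
    intro ℓ h1 h2 h
    have := hneg (ℓ-1) (by omega)
    rw [Nat.cast_sub h1] at this
    push_cast at this
    exact this (by linear_combination -h)
  have hrec : ∀ ℓ : ℕ, 1 ≤ ℓ → ℓ ≤ k - 1 →
      (ℓ : ℂ) * ((ℓ : ℂ) - 1 + 2*(mu - lam - (k : ℂ))) * Cform1 k lam mu ℓ
        = -(((k : ℂ) - ℓ + 1) * ((k : ℂ) - ℓ + 2*lam)) * Cform1 k lam mu (ℓ-1) := by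
    intro ℓ h1 h2
    have hk2 : 2 ≤ k := by omega
    match ℓ, h1 with
    | 1, _ =>
      have hk1 : (k:ℂ) - 1 ≠ 0 := by
        have : ((k:ℕ):ℂ) ≠ ((1:ℕ):ℂ) := by exact_mod_cast (by omega : k ≠ 1)
        push_cast at this
        exact sub_ne_zero.mpr this
      have hn0 : -2*(mu - lam - (k:ℂ)) ≠ 0 := by
        have := hneg 0 (by omega); push_cast at this
        exact fun h => this (by rw [h]; ring)
      have hn1 : -2*(mu - lam - (k:ℂ)) - 1 ≠ 0 := by
        have := hneg 1 (by omega); push_cast at this; exact this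
      have v2 : ∀ z : ℂ, cbinom z (1+1) = z*(z-1)/2 := by
        intro z
        simp only [cbinom, Finset.prod_range_succ, Finset.prod_range_zero, Nat.factorial]
        norm_num
      have v0 : cbinom ((k:ℂ) + 2*lam - 1) (1-1) = 1 := by
        simp [cbinom, Nat.factorial]
      simp only [Cform1, if_neg (one_ne_zero), Nat.sub_self, if_pos rfl]
      rw [v2, v2, v0]
      push_cast
      set w := -2 * (mu - lam - (k:ℂ)) with hw
      have hww : 2 * (mu - lam - (k:ℂ)) = -w := by rw [hw]; ring
      rw [hww]
      field_simp
      ring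
    | (n+2), _ =>
      have hk3 : n + 3 ≤ k := by omega
      have e1 : ((n:ℂ)+1) ≠ 0 := by
        have := Nat.cast_ne_zero (R := ℂ).mpr (Nat.succ_ne_zero n); push_cast at this; exact this
      have e2 : ((n:ℂ)+2) ≠ 0 := by
        have := Nat.cast_ne_zero (R := ℂ).mpr (by omega : n+2 ≠ 0); push_cast at this; exact this
      have e3 : ((n:ℂ)+3) ≠ 0 := by
        have := Nat.cast_ne_zero (R := ℂ).mpr (by omega : n+3 ≠ 0); push_cast at this; exact this
      have f1 : (k:ℂ) - ((n:ℂ)+1) ≠ 0 := by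
        have : ((k:ℕ):ℂ) ≠ ((n+1:ℕ):ℂ) := by exact_mod_cast (by omega : k ≠ n+1)
        push_cast at this
        exact sub_ne_zero.mpr this
      have f2 : (k:ℂ) - ((n:ℂ)+2) ≠ 0 := by
        have : ((k:ℕ):ℂ) ≠ ((n+2:ℕ):ℂ) := by exact_mod_cast (by omega : k ≠ n+2)
        push_cast at this
        exact sub_ne_zero.mpr this
      have g2 : -2*(mu - lam - (k:ℂ)) - ((n:ℂ)+2) ≠ 0 := by
        have := hneg (n+2) (by omega); push_cast at this; exact this
      have hc : cbinom (-2*(mu - lam - (k:ℂ))) (n+2) ≠ 0 := by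
        apply cbinom_ne_zero'
        intro i hi
        exact hneg i (by omega)
      have e3' : ((n:ℂ)+2+1) ≠ 0 := by
        rw [show ((n:ℂ)+2+1) = ((n:ℂ)+3) by ring]; exact e3
      rw [show (n+2-1 : ℕ) = n+1 from rfl]
      simp only [Cform1, if_neg (Nat.succ_ne_zero _)]
      simp only [show (n+1-1 : ℕ) = n from rfl, show (n+1+1 : ℕ) = n+2 from rfl,
        show (n+2-1 : ℕ) = n+1 from rfl]
      rw [cbinom_succ' (k:ℂ) (n+2), cbinom_succ' ((k:ℂ) + 2*lam - 1) n,
        cbinom_succ' (-2*(mu - lam - (k:ℂ))) (n+2)]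
      set a := cbinom (k:ℂ) (n+2) with ha
      set b := cbinom ((k:ℂ) + 2*lam - 1) n with hb
      set c := cbinom (-2*(mu - lam - (k:ℂ))) (n+2) with hcc
      push_cast
      set w := -2 * (mu - lam - (k:ℂ)) with hw
      have hww : 2 * (mu - lam - (k:ℂ)) = -w := by rw [hw]; ring
      rw [hww]
      field_simp
      ring
  refine ⟨⟨by simp [Cform1], hrec⟩, ?_⟩
  intro C hC0 hCrec ℓ h1 h2
  have main : ∀ m : ℕ, m ≤ k - 1 → C m = Cform1 k lam mu m := by
    intro m
    induction m with
    | zero => intro _; simp [Cform1, hC0]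
    | succ n ih =>
      intro h
      have e1 := hCrec (n+1) (by omega) h
      have e2 := hrec (n+1) (by omega) h
      rw [Nat.add_sub_cancel] at e1 e2
      rw [ih (by omega)] at e1
      have hnz : ((n+1:ℕ):ℂ) * (((n+1:ℕ):ℂ) - 1 + 2*(mu - lam - (k:ℂ))) ≠ 0 := by
        apply mul_ne_zero
        · exact Nat.cast_ne_zero.mpr (Nat.succ_ne_zero n)
        · exact hcoef (n+1) (by omega) (by omega)
      exact mul_left_cancel₀ hnz (e1.trans e2.symm)
  exact main ℓ h2

end Gr
end
end

section
/- For any f in the Grassmann algebra and homogeneous F, the identity ∂_x ∘ L^δ_{X_f}(F) = L^{δ+1}_{X_f}(∂_x F) + δ f'' F + (correction terms involving D̄ᵢ(f')D̄ᵢ(F)) holds; in particular, for f ∈ {1, ξ₁, ξ₂, x} (so that f'' = 0 and D̄ᵢ(f') = 0), the operator ∂_x intertwines L^δ_{X_f} and L^{δ+1}_{X_f}: ∂_x ∘ L^δ_{X_f} = L^{δ+1}_{X_f} ∘ ∂_x. -/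
noncomputable section

open Polynomial

namespace Gr

/-- The Hamiltonians `{1, ξ₁, ξ₂, x}` with their parities. -/
def aff4 : Fin 4 → Gr × Bool :=
  ![(oneG, false), (xi1, true), (xi2, true), (xG, false)]

/-- `∂ₓ∘L^δ_{X_f}(F) = L^{δ+1}_{X_f}(∂ₓF) + δf''F + correction terms
involving `D̄ᵢ(f')D̄ᵢ(F)`; for `f ∈ {1, ξ₁, ξ₂, x}` the operator `∂ₓ` intertwines
`L^δ_{X_f}` and `L^{δ+1}_{X_f}`. -/
theorem stmt11 :
    (∀ (f : Gr) (p : Bool), IsHom f p → ∀ (δ : ℂ) (F : Gr),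
      dX (L δ f p F)
        = L (δ + 1) f p (dX F) + δ • gmul (dX (dX f)) F
          - (sgn p * (1/2 : ℂ)) •
              (gmul (D1b (dX f)) (D1b F) + gmul (D2b (dX f)) (D2b F))) ∧
    (∀ i : Fin 4, ∀ (δ : ℂ) (F : Gr),
      dX (L δ (aff4 i).1 (aff4 i).2 F) = L (δ + 1) (aff4 i).1 (aff4 i).2 (dX F)) := by
  have main : ∀ (f : Gr) (p : Bool) (δ : ℂ) (F : Gr),
      dX (L δ f p F)
        = L (δ + 1) f p (dX F) + δ • gmul (dX (dX f)) F
          - (sgn p * (1/2 : ℂ)) •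
              (gmul (D1b (dX f)) (D1b F) + gmul (D2b (dX f)) (D2b F)) := by
    intro f p δ F
    obtain ⟨f0, f1, f2, f3⟩ := f
    obtain ⟨F0, F1, F2, F3⟩ := F
    simp only [L, Xv, gmul, dX, dXi1, dXi2, D1b, D2b, xi1, xi2, Prod.mk_add_mk,
      Prod.mk_sub_mk, Prod.smul_mk, Prod.mk.injEq, smul_eq_mul, Polynomial.smul_eq_C_mul,
      map_add, map_sub, Polynomial.derivative_mul, Polynomial.derivative_C_mul,
      mul_zero, zero_mul, mul_one, one_mul, add_zero, zero_add, sub_zero, zero_sub,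
      Polynomial.derivative_zero, Polynomial.derivative_one, Polynomial.derivative_C,
      map_one, map_neg, neg_mul, mul_neg, neg_neg]
    refine ⟨by ring, by ring, by ring, by ring⟩
  refine ⟨fun f p _ δ F => main f p δ F, fun i δ F => ?_⟩
  rw [main]
  have h1 : dX (dX (aff4 i).1) = 0 := by
    fin_cases i <;> simp [aff4, dX, oneG, xi1, xi2, xG, Prod.ext_iff]
  have h2 : D1b (dX (aff4 i).1) = 0 := by
    fin_cases i <;>
      simp [aff4, dX, D1b, dXi1, gmul, xi1, oneG, xi2, xG, Prod.ext_iff]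
  have h3 : D2b (dX (aff4 i).1) = 0 := by
    fin_cases i <;>
      simp [aff4, dX, D2b, dXi2, gmul, xi1, oneG, xi2, xG, Prod.ext_iff]
  have hz : ∀ G : Gr, gmul 0 G = 0 := by
    intro G; simp [gmul, Prod.ext_iff]
  rw [h1, h2, h3, hz, hz, hz]
  simp

end Gr
end
end

section
/- If μ - λ ∈ ℂ with 2(μ-λ) ∉ ℕ, then for every integer k ≥ 1 the homogeneous linear system consisting of the eight families of recurrences in ℓ (listed as conditions (d) in the construction of the osp(2|2)-equivariant quantization of order-k symbols), with prescribed leading coefficients C_{0,1} = C_{0,4} = 1 and C_{0,2} = C_{0,3} = C_{-1,i} = 0, admits exactly one solution (C_{m,i}). -/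
noncomputable section

open Polynomial

namespace Gr

section Aux
variable (k : ℕ) (lam mu ε : ℂ)

noncomputable def coA (ℓ : ℕ) : ℂ := ((ℓ:ℂ)+1)*((ℓ:ℂ)+2*(mu-lam-(k:ℂ)))
noncomputable def coB (ℓ : ℕ) : ℂ := (ℓ:ℂ)*((ℓ:ℂ)-1+2*(mu-lam-(k:ℂ)))

theorem coA_ne (hres : ∀ n : ℕ, 2*(mu - lam) ≠ (n : ℂ)) {ℓ : ℕ} (h : ℓ ≤ 2*k) :
    coA k lam mu ℓ ≠ 0 := by
  apply mul_ne_zero (Nat.cast_add_one_ne_zero ℓ)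
  intro h0
  apply hres (2*k - ℓ)
  have : ((2*k - ℓ : ℕ) : ℂ) = 2*(k:ℂ) - ℓ := by
    push_cast [Nat.cast_sub h]; ring
  rw [this]; linear_combination h0

theorem coB_ne (hres : ∀ n : ℕ, 2*(mu - lam) ≠ (n : ℂ)) {ℓ : ℕ} (h1 : 1 ≤ ℓ)
    (h : ℓ ≤ 2*k+1) : coB k lam mu ℓ ≠ 0 := by
  apply mul_ne_zero (by exact_mod_cast Nat.cast_ne_zero.mpr (by omega))
  intro h0
  apply hres (2*k + 1 - ℓ)
  have : ((2*k + 1 - ℓ : ℕ) : ℂ) = 2*(k:ℂ) + 1 - ℓ := by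
    push_cast [Nat.cast_sub h]; ring
  rw [this]; linear_combination h0

noncomputable def evenF (ℓ : ℕ) (a b : Fin 4 → ℂ) : Fin 4 → ℂ :=
  ![ (-(((k:ℂ)-ℓ+1)*((k:ℂ)-ℓ+2*lam)) * a 0) / coB k lam mu ℓ,
     (((k:ℂ)-ℓ+2*lam) * (ε*(b 1 - b 3) - ((k:ℂ)-ℓ+1)*a 1)) / coA k lam mu ℓ,
     (-((k:ℂ)-ℓ) * (ε*(b 0 + b 2) + ((k:ℂ)-ℓ+2*lam+1)*a 2)) / coA k lam mu ℓ,
     (-(((k:ℂ)-ℓ)*((k:ℂ)-ℓ+2*lam+1)) * a 3) / coB k lam mu ℓ ]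

noncomputable def oddF (ℓ : ℕ) (a b : Fin 4 → ℂ) : Fin 4 → ℂ :=
  ![ (((k:ℂ)-ℓ) * (ε * b 0 - ((k:ℂ)-ℓ+2*lam) * a 0)) / coA k lam mu ℓ,
     (((k:ℂ)-ℓ+2*lam) * (ε * b 3 - ((k:ℂ)-ℓ) * a 1)) / coA k lam mu ℓ,
     (((k:ℂ)-ℓ) * (ε * b 0 - ((k:ℂ)-ℓ+2*lam) * a 2)) / coA k lam mu ℓ,
     (-((k:ℂ)-ℓ+2*lam) * (ε * b 3 + ((k:ℂ)-ℓ) * a 3)) / coA k lam mu ℓ ]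

noncomputable def stepF (m : ℕ) (a b : Fin 4 → ℂ) : Fin 4 → ℂ :=
  if 2*k < m then 0
  else if m % 2 = 0 then evenF k lam mu ε (m/2) a b else oddF k lam mu ε (m/2) a b

noncomputable def solAux : ℕ → (Fin 4 → ℂ) × (Fin 4 → ℂ)
  | 0 => (0, ![1, 0, 0, 1])
  | n+1 => ((solAux n).2, stepF k lam mu ε (n+1) (solAux n).1 (solAux n).2)

noncomputable def csol (n : ℕ) : Fin 4 → ℂ := (solAux k lam mu ε n).2

theorem csol_zero : csol k lam mu ε 0 = ![1, 0, 0, 1] := rfl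

theorem csol_one : csol k lam mu ε 1 = stepF k lam mu ε 1 0 (csol k lam mu ε 0) := rfl

theorem csol_succ2 (n : ℕ) :
    csol k lam mu ε (n+2)
      = stepF k lam mu ε (n+2) (csol k lam mu ε n) (csol k lam mu ε (n+1)) := rfl

theorem csol_high {n : ℕ} (h : 2*k < n) : csol k lam mu ε n = 0 := by
  match n, h with
  | 1, h => rw [csol_one, stepF, if_pos h]
  | n+2, h => rw [csol_succ2, stepF, if_pos h]

theorem csol_even {j : ℕ} (h : j + 1 ≤ k) :
    csol k lam mu ε (2*(j+1))
      = evenF k lam mu ε (j+1) (csol k lam mu ε (2*j)) (csol k lam mu ε (2*j+1)) := by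
  have e : 2*(j+1) = (2*j+1)+1 := by omega
  rw [show 2*(j+1) = (2*j)+2 by omega, csol_succ2, stepF, if_neg (by omega),
    if_pos (by omega), show (2*j+2)/2 = j+1 by omega]

theorem csol_odd0 (h : 1 ≤ k) :
    csol k lam mu ε 1 = oddF k lam mu ε 0 0 (csol k lam mu ε 0) := by
  rw [csol_one, stepF, if_neg (by omega), if_neg (by omega)]

theorem csol_odd {j : ℕ} (h : j + 2 ≤ k) :
    csol k lam mu ε (2*(j+1)+1)
      = oddF k lam mu ε (j+1) (csol k lam mu ε (2*j+1)) (csol k lam mu ε (2*(j+1))) := by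
  rw [show 2*(j+1)+1 = (2*j+1)+2 by omega, csol_succ2, stepF, if_neg (by omega),
    if_neg (by omega), show ((2*j+1)+2)/2 = j+1 by omega]
  rw [show 2*j+1+1 = 2*(j+1) by omega]

noncomputable def Cfun (m : ℤ) : Fin 4 → ℂ :=
  if 0 ≤ m then csol k lam mu ε m.toNat else 0

theorem Cfun_nat (n : ℕ) : Cfun k lam mu ε (n : ℤ) = csol k lam mu ε n := by
  rw [Cfun, if_pos (Int.natCast_nonneg n), Int.toNat_natCast]

theorem Cfun_neg {m : ℤ} (h : m < 0) : Cfun k lam mu ε m = 0 := by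
  rw [Cfun, if_neg (by omega)]

end Aux

/-- if `2(μ-λ) ∉ ℕ`, the system of eight families of recurrences with
the prescribed leading coefficients `C_{0,1} = C_{0,4} = 1`, `C_{0,2} = C_{0,3} = 0`,
`C_{-1,i} = 0` admits exactly one solution `(C_{m,i})` (supported in `-1 ≤ m ≤ 2k`). -/
theorem stmt15 (k : ℕ) (hk : 1 ≤ k) (lam mu : ℂ)
    (hres : ∀ n : ℕ, 2*(mu - lam) ≠ (n : ℂ)) (ε : ℂ) (hε : ε = 1 ∨ ε = -1) :
    ∃! C : ℤ → Fin 4 → ℂ,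
      (∀ m : ℤ, (m < -1 ∨ 2*(k : ℤ) < m) → ∀ i : Fin 4, C m i = 0) ∧
      C 0 0 = 1 ∧ C 0 3 = 1 ∧ C 0 1 = 0 ∧ C 0 2 = 0 ∧ (∀ i : Fin 4, C (-1) i = 0) ∧
      (∀ ℓ : ℕ, ℓ ≤ k →
        ((ℓ : ℂ) * ((ℓ : ℂ) - 1 + 2*(mu - lam - (k : ℂ))) * C (2*ℓ) 0
            = -(((k : ℂ) - ℓ + 1) * ((k : ℂ) - ℓ + 2*lam)) * C (2*ℓ - 2) 0 ∧
         ((ℓ : ℂ) + 1) * ((ℓ : ℂ) + 2*(mu - lam - (k : ℂ))) * C (2*ℓ) 1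
            = ((k : ℂ) - ℓ + 2*lam) *
                (ε * (C (2*ℓ - 1) 1 - C (2*ℓ - 1) 3) - ((k : ℂ) - ℓ + 1) * C (2*ℓ - 2) 1) ∧
         ((ℓ : ℂ) + 1) * ((ℓ : ℂ) + 2*(mu - lam - (k : ℂ))) * C (2*ℓ) 2
            = -((k : ℂ) - ℓ) *
                (ε * (C (2*ℓ - 1) 0 + C (2*ℓ - 1) 2) + ((k : ℂ) - ℓ + 2*lam + 1) * C (2*ℓ - 2) 2) ∧
         (ℓ : ℂ) * ((ℓ : ℂ) - 1 + 2*(mu - lam - (k : ℂ))) * C (2*ℓ) 3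
            = -(((k : ℂ) - ℓ) * ((k : ℂ) - ℓ + 2*lam + 1)) * C (2*ℓ - 2) 3 ∧
         ((ℓ : ℂ) + 1) * ((ℓ : ℂ) + 2*(mu - lam - (k : ℂ))) * C (2*ℓ + 1) 0
            = ((k : ℂ) - ℓ) * (ε * C (2*ℓ) 0 - ((k : ℂ) - ℓ + 2*lam) * C (2*ℓ - 1) 0) ∧
         ((ℓ : ℂ) + 1) * ((ℓ : ℂ) + 2*(mu - lam - (k : ℂ))) * C (2*ℓ + 1) 1
            = ((k : ℂ) - ℓ + 2*lam) * (ε * C (2*ℓ) 3 - ((k : ℂ) - ℓ) * C (2*ℓ - 1) 1) ∧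
         ((ℓ : ℂ) + 1) * ((ℓ : ℂ) + 2*(mu - lam - (k : ℂ))) * C (2*ℓ + 1) 2
            = ((k : ℂ) - ℓ) * (ε * C (2*ℓ) 0 - ((k : ℂ) - ℓ + 2*lam) * C (2*ℓ - 1) 2) ∧
         ((ℓ : ℂ) + 1) * ((ℓ : ℂ) + 2*(mu - lam - (k : ℂ))) * C (2*ℓ + 1) 3
            = -((k : ℂ) - ℓ + 2*lam) * (ε * C (2*ℓ) 3 + ((k : ℂ) - ℓ) * C (2*ℓ - 1) 3))) := by
  clear hε
  have hA : ∀ {ℓ : ℕ}, ℓ ≤ k → coA k lam mu ℓ ≠ 0 :=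
    fun h => coA_ne k lam mu hres (by omega)
  have hB : ∀ {ℓ : ℕ}, 1 ≤ ℓ → ℓ ≤ k → coB k lam mu ℓ ≠ 0 :=
    fun h1 h2 => coB_ne k lam mu hres h1 (by omega)
  have hsupC : ∀ m : ℤ, (m < -1 ∨ 2*(k:ℤ) < m) → ∀ i : Fin 4, Cfun k lam mu ε m i = 0 := by
    intro m hm i
    rcases hm with hm | hm
    · rw [Cfun_neg k lam mu ε (by omega)]; rfl
    · rw [Cfun]; split_ifs with h
      · rw [csol_high k lam mu ε (by omega)]; rfl
      · rfl
  have hrecC : ∀ ℓ : ℕ, ℓ ≤ k →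
      ((ℓ : ℂ) * ((ℓ : ℂ) - 1 + 2*(mu - lam - (k : ℂ))) * Cfun k lam mu ε (2*ℓ) 0
          = -(((k : ℂ) - ℓ + 1) * ((k : ℂ) - ℓ + 2*lam)) * Cfun k lam mu ε (2*ℓ - 2) 0 ∧
       ((ℓ : ℂ) + 1) * ((ℓ : ℂ) + 2*(mu - lam - (k : ℂ))) * Cfun k lam mu ε (2*ℓ) 1
          = ((k : ℂ) - ℓ + 2*lam) *
              (ε * (Cfun k lam mu ε (2*ℓ - 1) 1 - Cfun k lam mu ε (2*ℓ - 1) 3) - ((k : ℂ) - ℓ + 1) * Cfun k lam mu ε (2*ℓ - 2) 1) ∧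
       ((ℓ : ℂ) + 1) * ((ℓ : ℂ) + 2*(mu - lam - (k : ℂ))) * Cfun k lam mu ε (2*ℓ) 2
          = -((k : ℂ) - ℓ) *
              (ε * (Cfun k lam mu ε (2*ℓ - 1) 0 + Cfun k lam mu ε (2*ℓ - 1) 2) + ((k : ℂ) - ℓ + 2*lam + 1) * Cfun k lam mu ε (2*ℓ - 2) 2) ∧
       (ℓ : ℂ) * ((ℓ : ℂ) - 1 + 2*(mu - lam - (k : ℂ))) * Cfun k lam mu ε (2*ℓ) 3
          = -(((k : ℂ) - ℓ) * ((k : ℂ) - ℓ + 2*lam + 1)) * Cfun k lam mu ε (2*ℓ - 2) 3 ∧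
       ((ℓ : ℂ) + 1) * ((ℓ : ℂ) + 2*(mu - lam - (k : ℂ))) * Cfun k lam mu ε (2*ℓ + 1) 0
          = ((k : ℂ) - ℓ) * (ε * Cfun k lam mu ε (2*ℓ) 0 - ((k : ℂ) - ℓ + 2*lam) * Cfun k lam mu ε (2*ℓ - 1) 0) ∧
       ((ℓ : ℂ) + 1) * ((ℓ : ℂ) + 2*(mu - lam - (k : ℂ))) * Cfun k lam mu ε (2*ℓ + 1) 1
          = ((k : ℂ) - ℓ + 2*lam) * (ε * Cfun k lam mu ε (2*ℓ) 3 - ((k : ℂ) - ℓ) * Cfun k lam mu ε (2*ℓ - 1) 1) ∧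
       ((ℓ : ℂ) + 1) * ((ℓ : ℂ) + 2*(mu - lam - (k : ℂ))) * Cfun k lam mu ε (2*ℓ + 1) 2
          = ((k : ℂ) - ℓ) * (ε * Cfun k lam mu ε (2*ℓ) 0 - ((k : ℂ) - ℓ + 2*lam) * Cfun k lam mu ε (2*ℓ - 1) 2) ∧
       ((ℓ : ℂ) + 1) * ((ℓ : ℂ) + 2*(mu - lam - (k : ℂ))) * Cfun k lam mu ε (2*ℓ + 1) 3
          = -((k : ℂ) - ℓ + 2*lam) * (ε * Cfun k lam mu ε (2*ℓ) 3 + ((k : ℂ) - ℓ) * Cfun k lam mu ε (2*ℓ - 1) 3)) := by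
    intro ℓ hℓ
    rcases Nat.eq_zero_or_pos ℓ with rfl | hpos
    · -- ℓ = 0
      have qm1 : Cfun k lam mu ε (-1) = 0 := Cfun_neg k lam mu ε (by norm_num)
      have qm2 : Cfun k lam mu ε (-2) = 0 := Cfun_neg k lam mu ε (by norm_num)
      have q0 : Cfun k lam mu ε 0 = ![1,0,0,1] := by
        rw [show (0:ℤ) = ((0:ℕ):ℤ) by norm_num, Cfun_nat, csol_zero]
      have q1 : Cfun k lam mu ε 1 = oddF k lam mu ε 0 0 ![1,0,0,1] := by
        rw [show (1:ℤ) = ((1:ℕ):ℤ) by norm_num, Cfun_nat,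
          csol_odd0 k lam mu ε hk, csol_zero]
      have h2 : (2:ℂ)*(mu-lam-(k:ℂ)) ≠ 0 := by
        intro h; exact hres (2*k) (by push_cast; linear_combination h)
      refine ⟨?_, ?_, ?_, ?_, ?_, ?_, ?_, ?_⟩
      all_goals simp [q0, q1, qm1, qm2, oddF, coA]
      all_goals try field_simp [h2, show mu-lam-(k:ℂ) ≠ 0 from fun h => h2 (by rw [h]; ring)]
      all_goals try ring
    · obtain ⟨j, rfl⟩ : ∃ j, ℓ = j + 1 := ⟨ℓ - 1, by omega⟩
      have r1 : (2*((j+1:ℕ):ℤ)) = ((2*(j+1):ℕ):ℤ) := by push_cast; ring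
      have r2 : (((2*(j+1):ℕ):ℤ) - 2) = ((2*j:ℕ):ℤ) := by push_cast; ring
      have r3 : (((2*(j+1):ℕ):ℤ) - 1) = ((2*j+1:ℕ):ℤ) := by push_cast; ring
      have r4 : (((2*(j+1):ℕ):ℤ) + 1) = ((2*(j+1)+1:ℕ):ℤ) := by push_cast; ring
      have hBn := hB (by omega) hℓ
      have hAn := hA hℓ
      simp only [r1, r2, r3, r4, Cfun_nat]
      refine ⟨?_, ?_, ?_, ?_, ?_, ?_, ?_, ?_⟩
      · rw [csol_even k lam mu ε hℓ]
        simp only [evenF, Matrix.cons_val_zero]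
        rw [← mul_div_assoc, div_eq_iff hBn, coB]
        push_cast; ring
      · rw [csol_even k lam mu ε hℓ]
        simp only [evenF, Matrix.cons_val_one, Matrix.head_cons, Matrix.cons_val_zero]
        rw [← mul_div_assoc, div_eq_iff hAn, coA]
        push_cast; ring
      · rw [csol_even k lam mu ε hℓ]
        simp only [evenF, Matrix.cons_val_two, Matrix.tail_cons, Matrix.head_cons]
        rw [← mul_div_assoc, div_eq_iff hAn, coA]
        push_cast; ring
      · rw [csol_even k lam mu ε hℓ]
        simp only [evenF, Matrix.cons_val_three, Matrix.tail_cons, Matrix.head_cons]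
        rw [← mul_div_assoc, div_eq_iff hBn, coB]
        push_cast; ring
      all_goals rcases Nat.lt_or_ge (j+1) k with hlt | hge
      case _ => -- eq5, j+1 < k
        rw [csol_odd k lam mu ε (by omega)]
        simp only [oddF, Matrix.cons_val_zero]
        rw [← mul_div_assoc, div_eq_iff hAn, coA]
        push_cast; ring
      case _ => -- eq5, j+1 = k
        have hke : j + 1 = k := le_antisymm hℓ hge
        subst hke
        rw [csol_high (j+1) lam mu ε (by omega)]
        simp [sub_self]
      case _ => -- eq6, j+1 < k
        rw [csol_odd k lam mu ε (by omega)]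
        simp only [oddF, Matrix.cons_val_one, Matrix.head_cons, Matrix.cons_val_zero]
        rw [← mul_div_assoc, div_eq_iff hAn, coA]
        push_cast; ring
      case _ => -- eq6, j+1 = k
        have hke : j + 1 = k := le_antisymm hℓ hge
        subst hke
        have h3 : csol (j+1) lam mu ε (2*(j+1)) 3 = 0 := by
          rw [csol_even (j+1) lam mu ε hℓ]
          simp [evenF, sub_self]
        rw [csol_high (j+1) lam mu ε (by omega)]
        simp [h3, sub_self]
      case _ => -- eq7, j+1 < k
        rw [csol_odd k lam mu ε (by omega)]
        simp only [oddF, Matrix.cons_val_two, Matrix.tail_cons, Matrix.head_cons]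
        rw [← mul_div_assoc, div_eq_iff hAn, coA]
        push_cast; ring
      case _ => -- eq7, j+1 = k
        have hke : j + 1 = k := le_antisymm hℓ hge
        subst hke
        rw [csol_high (j+1) lam mu ε (by omega)]
        simp [sub_self]
      case _ => -- eq8, j+1 < k
        rw [csol_odd k lam mu ε (by omega)]
        simp only [oddF, Matrix.cons_val_three, Matrix.tail_cons, Matrix.head_cons]
        rw [← mul_div_assoc, div_eq_iff hAn, coA]
        push_cast; ring
      case _ => -- eq8, j+1 = k
        have hke : j + 1 = k := le_antisymm hℓ hge
        subst hke
        have h3 : csol (j+1) lam mu ε (2*(j+1)) 3 = 0 := by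
          rw [csol_even (j+1) lam mu ε hℓ]
          simp [evenF, sub_self]
        rw [csol_high (j+1) lam mu ε (by omega)]
        simp [h3, sub_self]
  refine ⟨Cfun k lam mu ε, ⟨hsupC, ?_, ?_, ?_, ?_, ?_, hrecC⟩, ?_⟩
  · rw [show (0:ℤ) = ((0:ℕ):ℤ) by norm_num, Cfun_nat, csol_zero]; norm_num
  · rw [show (0:ℤ) = ((0:ℕ):ℤ) by norm_num, Cfun_nat, csol_zero]; norm_num; rfl
  · rw [show (0:ℤ) = ((0:ℕ):ℤ) by norm_num, Cfun_nat, csol_zero]; norm_num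
  · rw [show (0:ℤ) = ((0:ℕ):ℤ) by norm_num, Cfun_nat, csol_zero]; norm_num; rfl
  · intro i; rw [Cfun_neg k lam mu ε (by norm_num)]; rfl
  rintro D ⟨hsup, h00, h03, h01, h02, hDm1, hrec⟩
  have key : ∀ n : ℕ, n ≤ 2*k → D (n:ℤ) = csol k lam mu ε n := by
    intro n
    induction n using Nat.strong_induction_on with
    | _ n ih =>
      intro hn
      rcases Nat.eq_zero_or_pos n with rfl | hp
      · funext i; fin_cases i
        · simpa [csol_zero] using h00
        · simpa [csol_zero] using h01
        · simpa [csol_zero] using h02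
        · simpa [csol_zero] using h03
      · obtain ⟨n, rfl⟩ : ∃ m, n = m + 1 := ⟨n - 1, by omega⟩
        rcases Nat.even_or_odd (n+1) with ⟨l, hl⟩ | ⟨l, hl⟩
        · -- even : n+1 = 2*(j+1)
          obtain ⟨j, rfl⟩ : ∃ j, l = j + 1 := ⟨l - 1, by omega⟩
          have hjk : j + 1 ≤ k := by omega
          have hBn := hB (by omega) hjk
          have hAn := hA hjk
          obtain ⟨e1, e2, e3, e4, -, -, -, -⟩ := hrec (j+1) hjk
          have r1 : (2*((j+1:ℕ):ℤ)) = ((2*(j+1):ℕ):ℤ) := by push_cast; ring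
          have r2 : (((2*(j+1):ℕ):ℤ) - 2) = ((2*j:ℕ):ℤ) := by push_cast; ring
          have r3 : (((2*(j+1):ℕ):ℤ) - 1) = ((2*j+1:ℕ):ℤ) := by push_cast; ring
          simp only [r1, r2, r3] at e1 e2 e3 e4
          simp only [ih (2*j) (by omega) (by omega),
            ih (2*j+1) (by omega) (by omega)] at e1 e2 e3 e4
          have g0 : D ((2*(j+1):ℕ):ℤ) 0 = csol k lam mu ε (2*(j+1)) 0 := by
            rw [csol_even k lam mu ε hjk]
            simp only [evenF, Matrix.cons_val_zero]
            rw [eq_div_iff hBn, coB]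
            linear_combination e1
          have g1 : D ((2*(j+1):ℕ):ℤ) 1 = csol k lam mu ε (2*(j+1)) 1 := by
            rw [csol_even k lam mu ε hjk]
            simp only [evenF, Matrix.cons_val_one, Matrix.head_cons, Matrix.cons_val_zero]
            rw [eq_div_iff hAn, coA]
            linear_combination e2
          have g2 : D ((2*(j+1):ℕ):ℤ) 2 = csol k lam mu ε (2*(j+1)) 2 := by
            rw [csol_even k lam mu ε hjk]
            simp only [evenF, Matrix.cons_val_two, Matrix.tail_cons, Matrix.head_cons]
            rw [eq_div_iff hAn, coA]
            linear_combination e3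
          have g3 : D ((2*(j+1):ℕ):ℤ) 3 = csol k lam mu ε (2*(j+1)) 3 := by
            rw [csol_even k lam mu ε hjk]
            simp only [evenF, Matrix.cons_val_three, Matrix.tail_cons, Matrix.head_cons]
            rw [eq_div_iff hBn, coB]
            linear_combination e4
          have hn2 : n + 1 = 2*(j+1) := by omega
          rw [hn2]
          funext i; fin_cases i
          · exact g0
          · exact g1
          · exact g2
          · exact g3
        · rcases Nat.eq_zero_or_pos l with rfl | hl1
          · -- n+1 = 1
            obtain ⟨e5, e6, e7, e8⟩ := (hrec 0 (by omega)).2.2.2.2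
            have s0 : (2*((0:ℕ):ℤ)) = ((0:ℕ):ℤ) := by norm_num
            have t1 : (((0:ℕ):ℤ) + 1) = ((1:ℕ):ℤ) := by norm_num
            have tm1 : (((0:ℕ):ℤ) - 1) = (-1:ℤ) := by norm_num
            simp only [s0, t1, tm1] at e5 e6 e7 e8
            simp only [ih 0 (by omega) (by omega), hDm1] at e5 e6 e7 e8
            have hA0 := hA (Nat.zero_le k)
            have g0 : D ((1:ℕ):ℤ) 0 = csol k lam mu ε 1 0 := by
              rw [csol_odd0 k lam mu ε hk]
              simp only [oddF, Matrix.cons_val_zero, Pi.zero_apply]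
              rw [eq_div_iff hA0, coA]
              linear_combination e5
            have g1 : D ((1:ℕ):ℤ) 1 = csol k lam mu ε 1 1 := by
              rw [csol_odd0 k lam mu ε hk]
              simp only [oddF, Matrix.cons_val_one, Matrix.head_cons, Matrix.cons_val_zero, Pi.zero_apply]
              rw [eq_div_iff hA0, coA]
              linear_combination e6
            have g2 : D ((1:ℕ):ℤ) 2 = csol k lam mu ε 1 2 := by
              rw [csol_odd0 k lam mu ε hk]
              simp only [oddF, Matrix.cons_val_two, Matrix.tail_cons, Matrix.head_cons,
                Pi.zero_apply]
              rw [eq_div_iff hA0, coA]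
              linear_combination e7
            have g3 : D ((1:ℕ):ℤ) 3 = csol k lam mu ε 1 3 := by
              rw [csol_odd0 k lam mu ε hk]
              simp only [oddF, Matrix.cons_val_three, Matrix.tail_cons, Matrix.head_cons,
                Pi.zero_apply]
              rw [eq_div_iff hA0, coA]
              linear_combination e8
            have hn2 : n + 1 = 1 := by omega
            rw [hn2]
            funext i; fin_cases i
            · exact g0
            · exact g1
            · exact g2
            · exact g3
          · -- n+1 = 2*(j+1)+1
            obtain ⟨j, rfl⟩ : ∃ j, l = j + 1 := ⟨l - 1, by omega⟩
            have hjk : j + 2 ≤ k := by omega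
            have hAn := hA (show j + 1 ≤ k by omega)
            obtain ⟨e5, e6, e7, e8⟩ := (hrec (j+1) (by omega)).2.2.2.2
            have r1 : (2*((j+1:ℕ):ℤ)) = ((2*(j+1):ℕ):ℤ) := by push_cast; ring
            have r3 : (((2*(j+1):ℕ):ℤ) - 1) = ((2*j+1:ℕ):ℤ) := by push_cast; ring
            have r4 : (((2*(j+1):ℕ):ℤ) + 1) = ((2*(j+1)+1:ℕ):ℤ) := by push_cast; ring
            simp only [r1, r3, r4] at e5 e6 e7 e8
            simp only [ih (2*(j+1)) (by omega) (by omega),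
              ih (2*j+1) (by omega) (by omega)] at e5 e6 e7 e8
            have g0 : D ((2*(j+1)+1:ℕ):ℤ) 0 = csol k lam mu ε (2*(j+1)+1) 0 := by
              rw [csol_odd k lam mu ε hjk]
              simp only [oddF, Matrix.cons_val_zero]
              rw [eq_div_iff hAn, coA]
              linear_combination e5
            have g1 : D ((2*(j+1)+1:ℕ):ℤ) 1 = csol k lam mu ε (2*(j+1)+1) 1 := by
              rw [csol_odd k lam mu ε hjk]
              simp only [oddF, Matrix.cons_val_one, Matrix.head_cons, Matrix.cons_val_zero]
              rw [eq_div_iff hAn, coA]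
              linear_combination e6
            have g2 : D ((2*(j+1)+1:ℕ):ℤ) 2 = csol k lam mu ε (2*(j+1)+1) 2 := by
              rw [csol_odd k lam mu ε hjk]
              simp only [oddF, Matrix.cons_val_two, Matrix.tail_cons, Matrix.head_cons]
              rw [eq_div_iff hAn, coA]
              linear_combination e7
            have g3 : D ((2*(j+1)+1:ℕ):ℤ) 3 = csol k lam mu ε (2*(j+1)+1) 3 := by
              rw [csol_odd k lam mu ε hjk]
              simp only [oddF, Matrix.cons_val_three, Matrix.tail_cons, Matrix.head_cons]
              rw [eq_div_iff hAn, coA]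
              linear_combination e8
            have hn2 : n + 1 = 2*(j+1)+1 := by omega
            rw [hn2]
            funext i; fin_cases i
            · exact g0
            · exact g1
            · exact g2
            · exact g3
  funext m i
  by_cases h0 : 0 ≤ m
  · by_cases h2k : m ≤ 2*(k:ℤ)
    · have hm : m = ((m.toNat : ℕ) : ℤ) := by omega
      rw [hm, key m.toNat (by omega), Cfun_nat]
    · rw [hsup m (Or.inr (by omega)) i, hsupC m (Or.inr (by omega)) i]
  · rcases eq_or_ne m (-1) with rfl | hne
    · rw [hDm1 i, Cfun_neg k lam mu ε (by norm_num)]; rfl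
    · rw [hsup m (Or.inl (by omega)) i, hsupC m (Or.inl (by omega)) i]

end Gr
end
end

section
/- The operator DIV¹(F₁,F₂) = (-1)^{p(F)+1}( ((k+2λ)/k)·D̄₂(F₂) + D̄₁(F₁), D̄₂(F₁) - ((k+2λ)/k)·D̄₁(F₂) ) on pairs of homogeneous elements of the Grassmann algebra commutes with the diagonal affine action: for f ∈ {1, ξ₁, ξ₂, x, ξ₁ξ₂}, DIV¹ ∘ (L^δ_{X_f} ⊕ L^δ_{X_f}) equals (-1)^{p(f)} (L^{δ+1/2}_{X_f} ⊕ L^{δ+1/2}_{X_f}) ∘ DIV¹ plus the rotation correction determined by the constant D̄₁D̄₂(f), and this correction vanishes for f ∈ {1, ξ₁, ξ₂, x}. -/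
noncomputable section

open Polynomial

namespace Gr

/-- The divergence operator `DIV¹` on symbol pairs of parity `pF`. -/
noncomputable def Div1 (k : ℤ) (lam : ℂ) (pF : Bool) (F : Gr × Gr) : Gr × Gr :=
  (-(sgn pF)) • ((((k : ℂ) + 2*lam) / (k : ℂ)) • D2b F.2 + D1b F.1,
                 D2b F.1 - (((k : ℂ) + 2*lam) / (k : ℂ)) • D1b F.2)

set_option maxHeartbeats 4000000 in
private lemma key0 (k : ℤ) (lam mu : ℂ) (pF : Bool) (F1 F2 : Gr)
    (h1 : IsHom F1 pF) (h2 : IsHom F2 pF) :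
    Div1 k lam pF (L (mu - lam - (k : ℂ)) oneG false F1,
                   L (mu - lam - (k : ℂ)) oneG false F2)
      = sgn false •
          (L (mu - lam - (k : ℂ) + 1/2) oneG false (Div1 k lam pF (F1, F2)).1,
           L (mu - lam - (k : ℂ) + 1/2) oneG false (Div1 k lam pF (F1, F2)).2)
        + (sgn false * (0 : ℂ) * (1/2 : ℂ)) •
            (-(Div1 k lam pF (F1, F2)).2, (Div1 k lam pF (F1, F2)).1) := by
  cases pF <;>
  · simp only [IsHom, reduceIte] at h1 h2
    obtain ⟨e1, e2⟩ := h1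
    obtain ⟨e3, e4⟩ := h2
    refine Prod.ext (Prod.ext ?_ (Prod.ext ?_ (Prod.ext ?_ ?_)))
      (Prod.ext ?_ (Prod.ext ?_ (Prod.ext ?_ ?_))) <;>
      simp only [Div1, L, Xv, D1b, D2b, dXi1, dXi2, dX, gmul, xi1, xi2, xi12, oneG, xG, sgn,
          reduceIte, Bool.false_eq_true, Bool.true_eq_false, if_false, if_true, one_smul,
          e1, e2, e3, e4, Prod.smul_mk, Prod.mk_add_mk, Prod.mk_sub_mk, Prod.neg_mk, Prod.fst, Prod.snd,
          derivative_mul, derivative_add, derivative_sub, derivative_zero, derivative_smul,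
          derivative_one, derivative_X, derivative_C, map_add, map_sub, map_mul, map_neg, map_zero,
          smul_zero, smul_add, smul_sub, smul_neg, mul_smul_comm, smul_mul_assoc, zero_smul,
          mul_zero, zero_mul, add_zero, zero_add, mul_one, one_mul, sub_zero, zero_sub, neg_zero,
          neg_one_mul, neg_mul, mul_neg, neg_neg, neg_add_rev, mul_add, add_mul, mul_sub, sub_mul] <;>
      match_scalars <;> ring

set_option maxHeartbeats 4000000 in
private lemma key1 (k : ℤ) (lam mu : ℂ) (pF : Bool) (F1 F2 : Gr)
    (h1 : IsHom F1 pF) (h2 : IsHom F2 pF) :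
    Div1 k lam pF (L (mu - lam - (k : ℂ)) xi1 true F1,
                   L (mu - lam - (k : ℂ)) xi1 true F2)
      = sgn true •
          (L (mu - lam - (k : ℂ) + 1/2) xi1 true (Div1 k lam pF (F1, F2)).1,
           L (mu - lam - (k : ℂ) + 1/2) xi1 true (Div1 k lam pF (F1, F2)).2)
        + (sgn true * (0 : ℂ) * (1/2 : ℂ)) •
            (-(Div1 k lam pF (F1, F2)).2, (Div1 k lam pF (F1, F2)).1) := by
  cases pF <;>
  · simp only [IsHom, reduceIte] at h1 h2
    obtain ⟨e1, e2⟩ := h1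
    obtain ⟨e3, e4⟩ := h2
    refine Prod.ext (Prod.ext ?_ (Prod.ext ?_ (Prod.ext ?_ ?_)))
      (Prod.ext ?_ (Prod.ext ?_ (Prod.ext ?_ ?_))) <;>
      simp only [Div1, L, Xv, D1b, D2b, dXi1, dXi2, dX, gmul, xi1, xi2, xi12, oneG, xG, sgn,
          reduceIte, Bool.false_eq_true, Bool.true_eq_false, if_false, if_true, one_smul,
          e1, e2, e3, e4, Prod.smul_mk, Prod.mk_add_mk, Prod.mk_sub_mk, Prod.neg_mk, Prod.fst, Prod.snd,
          derivative_mul, derivative_add, derivative_sub, derivative_zero, derivative_smul,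
          derivative_one, derivative_X, derivative_C, map_add, map_sub, map_mul, map_neg, map_zero,
          smul_zero, smul_add, smul_sub, smul_neg, mul_smul_comm, smul_mul_assoc, zero_smul,
          mul_zero, zero_mul, add_zero, zero_add, mul_one, one_mul, sub_zero, zero_sub, neg_zero,
          neg_one_mul, neg_mul, mul_neg, neg_neg, neg_add_rev, mul_add, add_mul, mul_sub, sub_mul] <;>
      match_scalars <;> ring

set_option maxHeartbeats 4000000 in
private lemma key2 (k : ℤ) (lam mu : ℂ) (pF : Bool) (F1 F2 : Gr)
    (h1 : IsHom F1 pF) (h2 : IsHom F2 pF) :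
    Div1 k lam pF (L (mu - lam - (k : ℂ)) xi2 true F1,
                   L (mu - lam - (k : ℂ)) xi2 true F2)
      = sgn true •
          (L (mu - lam - (k : ℂ) + 1/2) xi2 true (Div1 k lam pF (F1, F2)).1,
           L (mu - lam - (k : ℂ) + 1/2) xi2 true (Div1 k lam pF (F1, F2)).2)
        + (sgn true * (0 : ℂ) * (1/2 : ℂ)) •
            (-(Div1 k lam pF (F1, F2)).2, (Div1 k lam pF (F1, F2)).1) := by
  cases pF <;>
  · simp only [IsHom, reduceIte] at h1 h2
    obtain ⟨e1, e2⟩ := h1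
    obtain ⟨e3, e4⟩ := h2
    refine Prod.ext (Prod.ext ?_ (Prod.ext ?_ (Prod.ext ?_ ?_)))
      (Prod.ext ?_ (Prod.ext ?_ (Prod.ext ?_ ?_))) <;>
      simp only [Div1, L, Xv, D1b, D2b, dXi1, dXi2, dX, gmul, xi1, xi2, xi12, oneG, xG, sgn,
          reduceIte, Bool.false_eq_true, Bool.true_eq_false, if_false, if_true, one_smul,
          e1, e2, e3, e4, Prod.smul_mk, Prod.mk_add_mk, Prod.mk_sub_mk, Prod.neg_mk, Prod.fst, Prod.snd,
          derivative_mul, derivative_add, derivative_sub, derivative_zero, derivative_smul,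
          derivative_one, derivative_X, derivative_C, map_add, map_sub, map_mul, map_neg, map_zero,
          smul_zero, smul_add, smul_sub, smul_neg, mul_smul_comm, smul_mul_assoc, zero_smul,
          mul_zero, zero_mul, add_zero, zero_add, mul_one, one_mul, sub_zero, zero_sub, neg_zero,
          neg_one_mul, neg_mul, mul_neg, neg_neg, neg_add_rev, mul_add, add_mul, mul_sub, sub_mul] <;>
      match_scalars <;> ring

set_option maxHeartbeats 4000000 in
private lemma key3 (k : ℤ) (lam mu : ℂ) (pF : Bool) (F1 F2 : Gr)
    (h1 : IsHom F1 pF) (h2 : IsHom F2 pF) :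
    Div1 k lam pF (L (mu - lam - (k : ℂ)) xG false F1,
                   L (mu - lam - (k : ℂ)) xG false F2)
      = sgn false •
          (L (mu - lam - (k : ℂ) + 1/2) xG false (Div1 k lam pF (F1, F2)).1,
           L (mu - lam - (k : ℂ) + 1/2) xG false (Div1 k lam pF (F1, F2)).2)
        + (sgn false * (0 : ℂ) * (1/2 : ℂ)) •
            (-(Div1 k lam pF (F1, F2)).2, (Div1 k lam pF (F1, F2)).1) := by
  cases pF <;>
  · simp only [IsHom, reduceIte] at h1 h2
    obtain ⟨e1, e2⟩ := h1
    obtain ⟨e3, e4⟩ := h2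
    refine Prod.ext (Prod.ext ?_ (Prod.ext ?_ (Prod.ext ?_ ?_)))
      (Prod.ext ?_ (Prod.ext ?_ (Prod.ext ?_ ?_))) <;>
      simp only [Div1, L, Xv, D1b, D2b, dXi1, dXi2, dX, gmul, xi1, xi2, xi12, oneG, xG, sgn,
          reduceIte, Bool.false_eq_true, Bool.true_eq_false, if_false, if_true, one_smul,
          e1, e2, e3, e4, Prod.smul_mk, Prod.mk_add_mk, Prod.mk_sub_mk, Prod.neg_mk, Prod.fst, Prod.snd,
          derivative_mul, derivative_add, derivative_sub, derivative_zero, derivative_smul,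
          derivative_one, derivative_X, derivative_C, map_add, map_sub, map_mul, map_neg, map_zero,
          smul_zero, smul_add, smul_sub, smul_neg, mul_smul_comm, smul_mul_assoc, zero_smul,
          mul_zero, zero_mul, add_zero, zero_add, mul_one, one_mul, sub_zero, zero_sub, neg_zero,
          neg_one_mul, neg_mul, mul_neg, neg_neg, neg_add_rev, mul_add, add_mul, mul_sub, sub_mul] <;>
      match_scalars <;> ring

set_option maxHeartbeats 4000000 in
private lemma key4 (k : ℤ) (lam mu : ℂ) (pF : Bool) (F1 F2 : Gr)
    (h1 : IsHom F1 pF) (h2 : IsHom F2 pF) :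
    Div1 k lam pF (L (mu - lam - (k : ℂ)) xi12 false F1,
                   L (mu - lam - (k : ℂ)) xi12 false F2)
      = sgn false •
          (L (mu - lam - (k : ℂ) + 1/2) xi12 false (Div1 k lam pF (F1, F2)).1,
           L (mu - lam - (k : ℂ) + 1/2) xi12 false (Div1 k lam pF (F1, F2)).2)
        + (sgn false * (-1 : ℂ) * (1/2 : ℂ)) •
            (-(Div1 k lam pF (F1, F2)).2, (Div1 k lam pF (F1, F2)).1) := by
  cases pF <;>
  · simp only [IsHom, reduceIte] at h1 h2
    obtain ⟨e1, e2⟩ := h1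
    obtain ⟨e3, e4⟩ := h2
    refine Prod.ext (Prod.ext ?_ (Prod.ext ?_ (Prod.ext ?_ ?_)))
      (Prod.ext ?_ (Prod.ext ?_ (Prod.ext ?_ ?_))) <;>
      simp only [Div1, L, Xv, D1b, D2b, dXi1, dXi2, dX, gmul, xi1, xi2, xi12, oneG, xG, sgn,
          reduceIte, Bool.false_eq_true, Bool.true_eq_false, if_false, if_true, one_smul,
          e1, e2, e3, e4, Prod.smul_mk, Prod.mk_add_mk, Prod.mk_sub_mk, Prod.neg_mk, Prod.fst, Prod.snd,
          derivative_mul, derivative_add, derivative_sub, derivative_zero, derivative_smul,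
          derivative_one, derivative_X, derivative_C, map_add, map_sub, map_mul, map_neg, map_zero,
          smul_zero, smul_add, smul_sub, smul_neg, mul_smul_comm, smul_mul_assoc, zero_smul,
          mul_zero, zero_mul, add_zero, zero_add, mul_one, one_mul, sub_zero, zero_sub, neg_zero,
          neg_one_mul, neg_mul, mul_neg, neg_neg, neg_add_rev, mul_add, add_mul, mul_sub, sub_mul] <;>
      match_scalars <;> ring

/-- for affine `f`, `D̄₁D̄₂(f)` is a constant `c`, and `DIV¹` commutes
with the diagonal affine action up to `(-1)^{p(f)}` and the rotation correction
determined by `c`; the correction vanishes for `f ∈ {1, ξ₁, ξ₂, x}`. -/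
theorem stmt17 (k : ℤ) (hk : k ≠ 0) (lam mu : ℂ) :
    ∀ i : Fin 5, ∃ c : ℂ,
      D1b (D2b (aff5 i).1) = c • oneG ∧
      (∀ (pF : Bool) (F1 F2 : Gr), IsHom F1 pF → IsHom F2 pF →
        Div1 k lam pF (L (mu - lam - (k : ℂ)) (aff5 i).1 (aff5 i).2 F1,
                       L (mu - lam - (k : ℂ)) (aff5 i).1 (aff5 i).2 F2)
          = sgn (aff5 i).2 •
              (L (mu - lam - (k : ℂ) + 1/2) (aff5 i).1 (aff5 i).2 (Div1 k lam pF (F1, F2)).1,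
               L (mu - lam - (k : ℂ) + 1/2) (aff5 i).1 (aff5 i).2 (Div1 k lam pF (F1, F2)).2)
            + (sgn (aff5 i).2 * c * (1/2 : ℂ)) •
                (-(Div1 k lam pF (F1, F2)).2, (Div1 k lam pF (F1, F2)).1)) ∧
      ((i : ℕ) < 4 → c = 0) := by
  intro i
  fin_cases i
  · exact ⟨0, by simp [D1b, D2b, dXi1, dXi2, dX, gmul, xi1, xi2, oneG, xG, xi12, aff5, Prod.ext_iff], key0 k lam mu, fun _ => rfl⟩
  · exact ⟨0, by simp [D1b, D2b, dXi1, dXi2, dX, gmul, xi1, xi2, oneG, xG, xi12, aff5, Prod.ext_iff], key1 k lam mu, fun _ => rfl⟩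
  · exact ⟨0, by simp [D1b, D2b, dXi1, dXi2, dX, gmul, xi1, xi2, oneG, xG, xi12, aff5, Prod.ext_iff], key2 k lam mu, fun _ => rfl⟩
  · exact ⟨0, by simp [D1b, D2b, dXi1, dXi2, dX, gmul, xi1, xi2, oneG, xG, xi12, aff5, Prod.ext_iff], key3 k lam mu, fun _ => rfl⟩
  · exact ⟨-1, by simp [D1b, D2b, dXi1, dXi2, dX, gmul, xi1, xi2, oneG, xG, xi12, aff5, Prod.ext_iff], key4 k lam mu, fun h => by norm_num at h⟩

end Gr
end
end
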